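/- Fix integers k > ℓ ≥ 2, a real ε > 0, and a real c ≥ 1/(k−ℓ). Let n be a positive integer, let r = cn (rounded to an integer), and suppose p = p(n) satisfies p ≤ (1−ε)·e^{k−ℓ+1}/n^{k−ℓ} in the case c = 1/(k−ℓ), and p ≤ (1−ε)·((c−1/(k−ℓ))/c)^{(k−ℓ)c−1}·e^{k−ℓ+1}/n^{k−ℓ} in the case c > 1/(k−ℓ). Then with high probability the randomly colored random hypergraph H^{(k)}_{n,p,r} contains no rainbow ℓ-Hamilton cycle. -/

import Mathlib

open Finset Filter

/-- Weight of a single coordinate in the randomly colored random hypergraph: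
the value `none` (edge absent) has probability `1 - p`, and each color `some c`
has probability `p / r`. -/
noncomputable def colorWeight (p : ℝ) (r : ℕ) : Option (Fin r) → ℝ
  | none => 1 - p
  | some _ => p / r

/-- A configuration of the randomly colored random `k`-uniform hypergraph on vertex set
`Fin n` with color set `Fin r`: each `k`-element subset is either absent (`none`) or
present with some color. -/
abbrev HypConf (k n r : ℕ) := {s : Finset (Fin n) // s.card = k} → Option (Fin r)

open scoped Classical in
/-- The probability of the event `A` in the model `H^{(k)}_{n,p,r}`: k-sets appear
independently with probability `p` and get independent uniform colors from `Fin r`. -/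
noncomputable def hypProb (k n r : ℕ) (p : ℝ) (A : Set (HypConf k n r)) : ℝ :=
  ∑ ω ∈ Finset.univ.filter (fun ω => ω ∈ A), ∏ e, colorWeight p r (ω e)

/-- The `i`-th edge (0-indexed) of the `ℓ`-Hamilton cycle induced by the permutation `σ`:
`E_σ(i) = {σ(i(k-ℓ)+j mod n) : 0 ≤ j < k}`. -/
def hamEdge (k l : ℕ) {n : ℕ} (hn : 0 < n) (σ : Equiv.Perm (Fin n)) (i : ℕ) :
    Finset (Fin n) :=
  (Finset.range k).image fun j => σ ⟨(i * (k - l) + j) % n, Nat.mod_lt _ hn⟩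

/-- The permutation `σ` induces a rainbow `ℓ`-Hamilton cycle in the configuration `ω`,
with edge `i` present and colored `col i`, all colors pairwise distinct. -/
def IsRainbowHamPerm (k l : ℕ) {n r : ℕ} (ω : HypConf k n r) (hn : 0 < n)
    (σ : Equiv.Perm (Fin n)) (col : ℕ → Fin r) : Prop :=
  (∀ i < n / (k - l), ∃ he : (hamEdge k l hn σ i).card = k,
      ω ⟨hamEdge k l hn σ i, he⟩ = some (col i)) ∧
  ∀ i < n / (k - l), ∀ j < n / (k - l), i ≠ j → col i ≠ col j

/-- The colored hypergraph `ω` contains a rainbow `ℓ`-Hamilton cycle. -/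
def HasRainbowHamCycle (k l : ℕ) {n r : ℕ} (ω : HypConf k n r) : Prop :=
  ∃ (hn : 0 < n) (σ : Equiv.Perm (Fin n)) (col : ℕ → Fin r),
    IsRainbowHamPerm k l ω hn σ col

section Prob
open scoped Classical
variable {k n r : ℕ} {p : ℝ}

lemma sum_prod_swap (F : {s : Finset (Fin n) // s.card = k} → Option (Fin r) → ℝ) :
    ∑ ω : HypConf k n r, ∏ e, F e (ω e) = ∏ e, ∑ x, F e x := by
  rw [Finset.prod_univ_sum, Fintype.piFinset_univ]

lemma hypProb_eq_sum (A : Set (HypConf k n r)) :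
    hypProb k n r p A
      = ∑ ω : HypConf k n r, if ω ∈ A then ∏ e, colorWeight p r (ω e) else 0 := by
  rw [hypProb, Finset.sum_filter]

lemma colorWeight_nonneg (hp0 : 0 ≤ p) (hp1 : p ≤ 1) (x : Option (Fin r)) :
    0 ≤ colorWeight p r x := by
  cases x with
  | none => simp [colorWeight]; linarith
  | some c => exact div_nonneg hp0 (Nat.cast_nonneg r)

lemma prod_colorWeight_nonneg (hp0 : 0 ≤ p) (hp1 : p ≤ 1) (ω : HypConf k n r) :
    0 ≤ ∏ e, colorWeight p r (ω e) :=
  Finset.prod_nonneg fun e _ => colorWeight_nonneg hp0 hp1 _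

lemma hypProb_nonneg (hp0 : 0 ≤ p) (hp1 : p ≤ 1) (A : Set (HypConf k n r)) :
    0 ≤ hypProb k n r p A := by
  rw [hypProb]
  exact Finset.sum_nonneg fun ω _ => prod_colorWeight_nonneg hp0 hp1 ω

lemma sum_colorWeight (hr : 0 < r) : ∑ x : Option (Fin r), colorWeight p r x = 1 := by
  rw [Fintype.sum_option]
  simp only [colorWeight, Finset.sum_const, Finset.card_univ, Fintype.card_fin, nsmul_eq_mul]
  field_simp
  ring

lemma hypProb_univ (hr : 0 < r) : hypProb k n r p Set.univ = 1 := by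
  rw [hypProb_eq_sum]
  simp only [Set.mem_univ, if_true]
  calc (∑ ω : HypConf k n r, ∏ e, colorWeight p r (ω e))
      = ∏ e : {s : Finset (Fin n) // s.card = k}, ∑ x, colorWeight p r x :=
        sum_prod_swap _
    _ = 1 := by rw [sum_colorWeight hr]; simp

lemma hypProb_add_compl (hr : 0 < r) (P : HypConf k n r → Prop) :
    hypProb k n r p {ω | P ω} + hypProb k n r p {ω | ¬ P ω} = 1 := by
  rw [← hypProb_univ (k := k) (n := n) (p := p) hr]
  rw [hypProb_eq_sum, hypProb_eq_sum, hypProb_eq_sum, ← Finset.sum_add_distrib]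
  apply Finset.sum_congr rfl
  intro ω _
  by_cases h : P ω <;> simp [h]

end Prob
section Prob2
open scoped Classical
variable {k n r : ℕ} {p : ℝ}

lemma hypProb_le_sum {T : Type*} [Fintype T] (hp0 : 0 ≤ p) (hp1 : p ≤ 1)
    (A : T → Set (HypConf k n r)) (E : Set (HypConf k n r))
    (hE : ∀ ω ∈ E, ∃ t, ω ∈ A t) :
    hypProb k n r p E ≤ ∑ t : T, hypProb k n r p (A t) := by
  simp only [hypProb_eq_sum]
  rw [Finset.sum_comm]
  apply Finset.sum_le_sum
  intro ω _
  by_cases h : ω ∈ E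
  · obtain ⟨t, ht⟩ := hE ω h
    rw [if_pos h]
    calc ∏ e, colorWeight p r (ω e)
        = (if ω ∈ A t then ∏ e, colorWeight p r (ω e) else 0) := by rw [if_pos ht]
      _ ≤ ∑ t : T, if ω ∈ A t then ∏ e, colorWeight p r (ω e) else 0 := by
          apply Finset.single_le_sum (f := fun t => if ω ∈ A t then ∏ e, colorWeight p r (ω e) else 0)
            (fun t _ => ?_) (Finset.mem_univ t)
          split
          · exact prod_colorWeight_nonneg hp0 hp1 ω
          · exact le_refl _
  · rw [if_neg h]
    apply Finset.sum_nonneg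
    intro t _
    split
    · exact prod_colorWeight_nonneg hp0 hp1 ω
    · exact le_refl _

lemma hypProb_cylinder {m : ℕ} (hr : 0 < r) (hp0 : 0 ≤ p) (hp1 : p ≤ 1)
    (e : Fin m → {s : Finset (Fin n) // s.card = k}) (he : Function.Injective e)
    (v : Fin m → Option (Fin r)) :
    hypProb k n r p {ω | ∀ i, ω (e i) = v i} = ∏ i, colorWeight p r (v i) := by
  set F : {s : Finset (Fin n) // s.card = k} → Option (Fin r) → ℝ :=
    fun E x => colorWeight p r x * ∏ i, if e i = E ∧ x ≠ v i then 0 else 1 with hF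
  have step1 : hypProb k n r p {ω | ∀ i, ω (e i) = v i}
      = ∑ ω : HypConf k n r, ∏ E, F E (ω E) := by
    rw [hypProb_eq_sum]
    apply Finset.sum_congr rfl
    intro ω _
    rw [hF]
    simp only
    rw [Finset.prod_mul_distrib, Finset.prod_comm]
    have : ∀ i : Fin m, (∏ E, if e i = E ∧ ω E ≠ v i then (0:ℝ) else 1)
        = if ω (e i) = v i then 1 else 0 := by
      intro i
      rw [Finset.prod_eq_single (e i)]
      · by_cases h : ω (e i) = v i <;> simp [h]
      · intro E _ hne
        rw [if_neg]
        rintro ⟨h1, _⟩; exact hne h1.symm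
      · simp
    rw [Finset.prod_congr rfl (fun i _ => this i), Finset.prod_boole]
    simp only [Set.mem_setOf_eq, Finset.mem_univ, forall_true_left]
    by_cases h : ∀ i, ω (e i) = v i
    · rw [if_pos h, if_pos h, mul_one]
    · rw [if_neg h, if_neg h, mul_zero]
  rw [step1, sum_prod_swap]
  have imsub : (Finset.univ.image e) ⊆ Finset.univ := Finset.subset_univ _
  rw [← Finset.prod_subset imsub]
  · rw [Finset.prod_image (fun i _ j _ h => he h)]
    apply Finset.prod_congr rfl
    intro i _
    have : ∀ x : Option (Fin r), F (e i) x = if x = v i then colorWeight p r x else 0 := by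
      intro x
      rw [hF]; simp only
      rw [Finset.prod_eq_single i]
      · by_cases h : x = v i <;> simp [h]
      · intro j _ hne
        rw [if_neg]
        rintro ⟨h1, _⟩; exact hne (he h1)
      · simp
    rw [Finset.sum_congr rfl (fun x _ => this x), Finset.sum_ite_eq' Finset.univ (v i)]
    simp
  · intro E _ hE
    have : ∀ x, F E x = colorWeight p r x := by
      intro x
      rw [hF]; simp only
      rw [Finset.prod_eq_one, mul_one]
      intro i _
      rw [if_neg]
      rintro ⟨h1, _⟩
      exact hE (Finset.mem_image.2 ⟨i, Finset.mem_univ i, h1⟩)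
    rw [Finset.sum_congr rfl (fun x _ => this x), sum_colorWeight hr]

end Prob2
section Ham
open scoped Classical

lemma hamEdge_inj {k l n : ℕ} (hkl : l < k) (hkn : k < n) (hn : 0 < n)
    (σ : Equiv.Perm (Fin n)) {i j : ℕ} (hi : i < n / (k - l)) (hj : j < n / (k - l))
    (hij : hamEdge k l hn σ i = hamEdge k l hn σ j) : i = j := by
  set K := k - l with hK
  have hK1 : 1 ≤ K := Nat.sub_pos_of_lt hkl
  have hstart : ∀ {a : ℕ}, a < n / K → a * K < n := by
    intro a ha
    have h1 : (a + 1) * K ≤ (n / K) * K := Nat.mul_le_mul_right _ (by omega)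
    have h2 : (n / K) * K ≤ n := Nat.div_mul_le_self n K
    have h3 : (a + 1) * K = a * K + K := by ring
    omega
  have hiK := hstart hi
  have hjK := hstart hj
  -- the start of edge j lies in edge i
  have hmem : σ ⟨(j * K + 0) % n, Nat.mod_lt _ hn⟩ ∈ hamEdge k l hn σ j := by
    rw [hamEdge]
    exact Finset.mem_image.2 ⟨0, Finset.mem_range.2 (by omega), rfl⟩
  rw [← hij, hamEdge] at hmem
  obtain ⟨a, ha, heq⟩ := Finset.mem_image.1 hmem
  rw [Finset.mem_range] at ha
  have heq' : (j * K + 0) % n = (i * K + a) % n := congrArg Fin.val (σ.injective heq.symm)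
  simp only [Nat.add_zero] at heq'
  -- case a = 0 : starts equal
  rcases Nat.eq_zero_or_pos a with ha0 | ha0
  · subst ha0
    simp only [Nat.add_zero] at heq'
    rw [Nat.mod_eq_of_lt hjK, Nat.mod_eq_of_lt hiK] at heq'
    exact (Nat.eq_of_mul_eq_mul_right (by omega) (heq'.symm)).symm ▸ rfl
  -- case a > 0 : predecessor of start of edge j is in edge j, contradiction
  · exfalso
    have hb : a - 1 < k := by omega
    have hmem2 : σ ⟨(i * K + (a - 1)) % n, Nat.mod_lt _ hn⟩ ∈ hamEdge k l hn σ i := by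
      rw [hamEdge]
      exact Finset.mem_image.2 ⟨a - 1, Finset.mem_range.2 hb, rfl⟩
    rw [hij, hamEdge] at hmem2
    obtain ⟨t, ht, heq2⟩ := Finset.mem_image.1 hmem2
    rw [Finset.mem_range] at ht
    have heq2' : (i * K + (a - 1)) % n = (j * K + t) % n := congrArg Fin.val (σ.injective heq2.symm)
    -- j*K ≡ i*K + a  [MOD n]
    have h1 : Nat.ModEq n (j * K) (i * K + a) := heq'
    have h2 : Nat.ModEq n (i * K + (a - 1)) (j * K + t) := heq2'
    have h3 : Nat.ModEq n (j * K + t) (i * K + a + t) := Nat.ModEq.add_right t h1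
    have h4 : Nat.ModEq n (i * K + (a - 1)) (i * K + (a - 1) + (t + 1)) := by
      have : i * K + a + t = i * K + (a - 1) + (t + 1) := by omega
      exact (h2.trans h3).trans (by rw [this])
    have h5 : Nat.ModEq n 0 (t + 1) := by
      apply Nat.ModEq.add_left_cancel' (n := n) (i * K + (a - 1)) (a := 0) (b := t + 1)
      simpa using h4
    have h6 : n ∣ t + 1 := (Nat.modEq_zero_iff_dvd.1 h5.symm)
    have : n ≤ t + 1 := Nat.le_of_dvd (Nat.succ_pos t) h6
    omega

lemma bad_le {k l n r : ℕ} {p : ℝ} (hl2 : 2 ≤ l) (hkl : l < k) (hkn : k < n)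
    (hr : 0 < r) (hp0 : 0 ≤ p) (hp1 : p ≤ 1) :
    hypProb k n r p {ω | HasRainbowHamCycle k l ω}
      ≤ (n.factorial : ℝ) * (r.descFactorial (n / (k - l))) * (p / r) ^ (n / (k - l)) := by
  have hn : 0 < n := by omega
  set m := n / (k - l) with hm
  set A : Equiv.Perm (Fin n) × (Fin m ↪ Fin r) → Set (HypConf k n r) := fun t =>
    {ω | ∀ i : Fin m, ∃ he : (hamEdge k l hn t.1 i.val).card = k,
      ω ⟨hamEdge k l hn t.1 i.val, he⟩ = some (t.2 i)} with hA
  have cover : ∀ ω ∈ {ω : HypConf k n r | HasRainbowHamCycle k l ω}, ∃ t, ω ∈ A t := by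
    intro ω hω
    obtain ⟨hn', σ, col, hcol, hdist⟩ := hω
    refine ⟨⟨σ, ⟨fun i => col i.val, ?_⟩⟩, ?_⟩
    · intro i j hcolij
      by_contra hne
      exact hdist i.val i.isLt j.val j.isLt (fun h => hne (Fin.ext h)) hcolij
    · intro i
      exact hcol i.val i.isLt
  have each : ∀ t : Equiv.Perm (Fin n) × (Fin m ↪ Fin r), hypProb k n r p (A t) ≤ (p / r) ^ m := by
    intro t
    by_cases hcard : ∀ i : Fin m, (hamEdge k l hn t.1 i.val).card = k
    · set e : Fin m → {s : Finset (Fin n) // s.card = k} :=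
        fun i => ⟨hamEdge k l hn t.1 i.val, hcard i⟩ with he_def
      have hinj : Function.Injective e := by
        intro i j hij
        apply Fin.ext
        exact hamEdge_inj hkl hkn hn t.1 i.isLt j.isLt (congrArg Subtype.val hij)
      have hAeq : A t = {ω | ∀ i, ω (e i) = some (t.2 i)} := by
        ext ω
        constructor
        · intro h i
          obtain ⟨he, hval⟩ := h i
          exact hval
        · intro h i
          exact ⟨hcard i, h i⟩
      rw [hAeq, hypProb_cylinder hr hp0 hp1 e hinj]
      simp [colorWeight, Finset.prod_const]
      exact le_of_eq (div_pow p (r:ℝ) m).symm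
    · push_neg at hcard
      obtain ⟨i0, hi0⟩ := hcard
      have hAempty : A t = ∅ := by
        ext ω
        simp only [Set.mem_empty_iff_false, iff_false]
        intro h
        obtain ⟨he, _⟩ := h i0
        exact hi0 he
      rw [hAempty]
      have : hypProb k n r p ∅ = 0 := by
        rw [hypProb]
        simp
      rw [this]
      positivity
  calc hypProb k n r p {ω | HasRainbowHamCycle k l ω}
      ≤ ∑ t : Equiv.Perm (Fin n) × (Fin m ↪ Fin r), hypProb k n r p (A t) :=
        hypProb_le_sum hp0 hp1 A _ cover
    _ ≤ ∑ _t : Equiv.Perm (Fin n) × (Fin m ↪ Fin r), (p / r) ^ m :=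
        Finset.sum_le_sum (fun t _ => each t)
    _ = (Fintype.card (Equiv.Perm (Fin n) × (Fin m ↪ Fin r)) : ℝ) * (p / r) ^ m := by
        rw [Finset.sum_const, Finset.card_univ, nsmul_eq_mul]
    _ = (n.factorial : ℝ) * (r.descFactorial m) * (p / r) ^ m := by
        rw [Fintype.card_prod, Fintype.card_perm, Fintype.card_embedding_eq]
        simp only [Fintype.card_fin]
        push_cast
        ring

end Ham
section Stirling

lemma exp_inv_le {n : ℕ} (hn : 1 ≤ n) :
    Real.exp (1 / ((n:ℝ) + 1)) ≤ ((n:ℝ) + 1) / n := by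
  have hn0 : (0:ℝ) < n := by exact_mod_cast hn
  have h := Real.add_one_le_exp (-(1 / ((n:ℝ) + 1)))
  rw [Real.exp_neg] at h
  have h1 : (0:ℝ) < (n:ℝ) + 1 := by positivity
  have h2 : -(1 / ((n:ℝ) + 1)) + 1 = (n:ℝ) / ((n:ℝ)+1) := by field_simp; ring
  rw [h2] at h
  have h3 : (0:ℝ) < Real.exp (1 / ((n:ℝ) + 1)) := Real.exp_pos _
  have h5 : (n:ℝ) / ((n:ℝ)+1) * Real.exp (1 / ((n:ℝ) + 1)) ≤ 1 := by
    have := mul_le_mul_of_nonneg_right h (le_of_lt h3)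
    rwa [inv_mul_cancel₀ (ne_of_gt h3)] at this
  have h6 : (n:ℝ) * Real.exp (1/((n:ℝ)+1)) ≤ (n:ℝ)+1 := by
    have h7 := mul_le_mul_of_nonneg_right h5 (le_of_lt h1)
    have h8 : (n:ℝ)/((n:ℝ)+1) * Real.exp (1/((n:ℝ)+1)) * ((n:ℝ)+1)
        = (n:ℝ) * Real.exp (1/((n:ℝ)+1)) := by field_simp
    rw [h8] at h7; linarith
  rw [le_div_iff₀ hn0]
  linarith

lemma fact_upper : ∀ n : ℕ, 1 ≤ n →
    (n.factorial : ℝ) ≤ Real.exp 1 * n * ((n:ℝ) / Real.exp 1) ^ n := by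
  intro n hn
  induction n with
  | zero => omega
  | succ n ih =>
    have he : (0:ℝ) < Real.exp 1 := Real.exp_pos 1
    rcases Nat.eq_zero_or_pos n with h0 | h0
    · subst h0
      have : Real.exp 1 * ((1:ℕ):ℝ) * (((1:ℕ):ℝ) / Real.exp 1) ^ (1:ℕ) = 1 := by
        field_simp; norm_num
      rw [show (0+1 : ℕ) = 1 from rfl, this]
      norm_num [Nat.factorial]
    · have IH := ih h0
      have hn0 : (0:ℝ) < n := by exact_mod_cast h0
      have key : Real.exp 1 ≤ (((n:ℝ) + 1) / n) ^ (n+1) := by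
        have h1 : Real.exp 1 = Real.exp (1 / ((n:ℝ)+1)) ^ (n+1) := by
          rw [← Real.exp_nat_mul]
          congr 1
          push_cast
          field_simp
        rw [h1]
        apply pow_le_pow_left₀ (le_of_lt (Real.exp_pos _)) (exp_inv_le h0)
      have key2 : (n:ℝ)^(n+1) * Real.exp 1 ≤ ((n:ℝ)+1)^(n+1) := by
        calc (n:ℝ)^(n+1) * Real.exp 1 ≤ (n:ℝ)^(n+1) * (((n:ℝ)+1)/n)^(n+1) :=
              mul_le_mul_of_nonneg_left key (by positivity)
          _ = ((n:ℝ)+1)^(n+1) := by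
              rw [div_pow, mul_div_assoc']
              rw [mul_comm ((n:ℝ)^(n+1)) _, mul_div_assoc, div_self (by positivity), mul_one]
      have cast1 : ((n+1).factorial : ℝ) = ((n:ℝ)+1) * n.factorial := by
        rw [Nat.factorial_succ]; push_cast; ring
      rw [cast1]
      push_cast
      calc ((n:ℝ)+1) * n.factorial
          ≤ ((n:ℝ)+1) * (Real.exp 1 * n * ((n:ℝ)/Real.exp 1)^n) :=
            mul_le_mul_of_nonneg_left IH (by positivity)
        _ = Real.exp 1 * ((n:ℝ)+1) * ((n:ℝ)^(n+1) / Real.exp 1 ^ n) := by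
            rw [div_pow]; field_simp; ring
        _ ≤ Real.exp 1 * ((n:ℝ)+1) * (((n:ℝ)+1)^(n+1) / Real.exp 1 ^ (n+1)) := by
            apply mul_le_mul_of_nonneg_left _ (by positivity)
            rw [div_le_div_iff₀ (by positivity) (by positivity), pow_succ (Real.exp 1)]
            calc (n:ℝ)^(n+1) * (Real.exp 1 ^ n * Real.exp 1)
                = ((n:ℝ)^(n+1) * Real.exp 1) * Real.exp 1 ^ n := by ring
              _ ≤ ((n:ℝ)+1)^(n+1) * Real.exp 1 ^ n :=
                  mul_le_mul_of_nonneg_right key2 (by positivity)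
        _ = Real.exp 1 * ((n:ℝ)+1) * (((n:ℝ)+1)/Real.exp 1)^(n+1) := by
            rw [div_pow]

lemma fact_lower : ∀ n : ℕ, ((n:ℝ) / Real.exp 1) ^ n ≤ (n.factorial : ℝ) := by
  intro n
  induction n with
  | zero => simp
  | succ n ih =>
    have he : (0:ℝ) < Real.exp 1 := Real.exp_pos 1
    have he1 : (1:ℝ) ≤ Real.exp 1 := by linarith [Real.add_one_le_exp (1:ℝ)]
    rcases Nat.eq_zero_or_pos n with h0 | h0
    · subst h0
      norm_num [Nat.factorial]
      rw [inv_le_one_iff₀]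
      right; exact he1
    · have hn0 : (0:ℝ) < n := by exact_mod_cast h0
      have key : (((n:ℝ)+1)/n)^n ≤ Real.exp 1 := by
        have h1 : ((n:ℝ)+1)/n ≤ Real.exp (1/(n:ℝ)) := by
          calc ((n:ℝ)+1)/n = 1/(n:ℝ) + 1 := by field_simp; ring
            _ ≤ Real.exp (1/(n:ℝ)) := Real.add_one_le_exp _
        calc (((n:ℝ)+1)/n)^n ≤ Real.exp (1/(n:ℝ))^n :=
              pow_le_pow_left₀ (by positivity) h1 n
          _ = Real.exp 1 := by
              rw [← Real.exp_nat_mul, mul_one_div, div_self (by positivity)]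
      have key3 : ((n:ℝ)+1)^n ≤ Real.exp 1 * (n:ℝ)^n := by
        have hh := mul_le_mul_of_nonneg_right key (le_of_lt (pow_pos hn0 n))
        have hrw : (((n:ℝ)+1)/n)^n * (n:ℝ)^n = ((n:ℝ)+1)^n := by
          rw [div_pow]; field_simp
        rwa [hrw] at hh
      have key2 : ((n:ℝ)+1)^(n+1) ≤ Real.exp 1 * ((n:ℝ)+1) * (n:ℝ)^n := by
        calc ((n:ℝ)+1)^(n+1) = ((n:ℝ)+1)^n * ((n:ℝ)+1) := by rw [pow_succ]
          _ ≤ (Real.exp 1 * (n:ℝ)^n) * ((n:ℝ)+1) :=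
              mul_le_mul_of_nonneg_right key3 (by positivity)
          _ = Real.exp 1 * ((n:ℝ)+1) * (n:ℝ)^n := by ring
      have cast1 : ((n+1).factorial : ℝ) = ((n:ℝ)+1) * n.factorial := by
        rw [Nat.factorial_succ]; push_cast; ring
      rw [cast1]
      push_cast
      have step : (((n:ℝ)+1)/Real.exp 1)^(n+1) ≤ ((n:ℝ)+1) * ((n:ℝ)/Real.exp 1)^n := by
        rw [div_pow, div_pow, pow_succ (Real.exp 1)]
        rw [div_le_iff₀ (by positivity)]
        calc ((n:ℝ)+1)^(n+1)
            ≤ Real.exp 1 * ((n:ℝ)+1) * (n:ℝ)^n := key2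
          _ = ((n:ℝ)+1) * ((n:ℝ)^n / Real.exp 1 ^ n) * (Real.exp 1 ^ n * Real.exp 1) := by
              field_simp
      calc (((n:ℝ)+1)/Real.exp 1)^(n+1) ≤ ((n:ℝ)+1) * ((n:ℝ)/Real.exp 1)^n := step
        _ ≤ ((n:ℝ)+1) * n.factorial := mul_le_mul_of_nonneg_left ih (by positivity)

lemma descFactorial_le {r m : ℕ} (h : m ≤ r) (hr : 1 ≤ r) :
    (r.descFactorial m : ℝ) ≤
      (Real.exp 1 * r * ((r:ℝ) / Real.exp 1) ^ r) / ((((r - m : ℕ)):ℝ) / Real.exp 1) ^ (r - m) := by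
  have hdvd : (r - m).factorial ∣ r.factorial := Nat.factorial_dvd_factorial (Nat.sub_le r m)
  have hcast : (r.descFactorial m : ℝ) = (r.factorial : ℝ) / ((r - m).factorial : ℝ) := by
    rw [Nat.descFactorial_eq_div h]
    rw [Nat.cast_div hdvd (by positivity)]
  rw [hcast]
  have hdenom : (0:ℝ) < ((((r - m : ℕ)):ℝ) / Real.exp 1) ^ (r - m) := by
    rcases Nat.eq_zero_or_pos (r - m) with h0 | h0
    · rw [h0]; norm_num
    · have : (0:ℝ) < ((r - m : ℕ):ℝ) := by exact_mod_cast h0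
      positivity
  exact div_le_div₀ (by positivity) (fact_upper r hr) hdenom (fact_lower (r - m))

end Stirling
section Master
open scoped Classical

lemma master {k l n r : ℕ} {p C : ℝ} (hl2 : 2 ≤ l) (hkl : l < k) (hkn : k < n)
    (hr : 0 < r) (hmr : n / (k - l) ≤ r) (hp0 : 0 ≤ p) (hp1 : p ≤ 1)
    (hC : 0 ≤ C) (hpC : p ≤ C / (n:ℝ) ^ (k - l)) :
    hypProb k n r p {ω | HasRainbowHamCycle k l ω}
      ≤ Real.exp 1 ^ 2 * (n:ℝ) ^ (k - l) * r * C ^ (n / (k - l))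
          / Real.exp 1 ^ ((k - l + 1) * (n / (k - l)))
          * ((r:ℝ) ^ (r - n / (k - l)) / (((r - n / (k - l) : ℕ)):ℝ) ^ (r - n / (k - l))) := by
  have hK1 : 1 ≤ k - l := Nat.sub_pos_of_lt hkl
  set K := k - l with hK
  set m := n / K with hm
  set d := r - m with hd
  set ρ := n - K * m with hρdef
  have hn1 : 1 ≤ n := by omega
  have hmod := Nat.div_add_mod n K
  rw [← hm] at hmod
  have hmodlt : n % K < K := Nat.mod_lt n (by omega)
  have hKm : K * m ≤ n := by omega
  have hρK : ρ + 1 ≤ K := by omega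
  have hneq : n = K * m + ρ := by omega
  have hreq : r = m + d := by omega
  have hE : (0:ℝ) < Real.exp 1 := Real.exp_pos 1
  have hE1 : (1:ℝ) ≤ Real.exp 1 := by linarith [Real.add_one_le_exp (1:ℝ)]
  have hN : (0:ℝ) < (n:ℝ) := by exact_mod_cast hn1
  have hN1 : (1:ℝ) ≤ (n:ℝ) := by exact_mod_cast hn1
  have hR : (0:ℝ) < (r:ℝ) := by exact_mod_cast hr
  have hD0 : ((((d:ℕ)):ℝ)) ^ d ≠ 0 := by
    rcases Nat.eq_zero_or_pos d with h0 | h0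
    · rw [h0]; norm_num
    · have : (0:ℝ) < ((d:ℕ):ℝ) := by exact_mod_cast h0
      positivity
  have hDnn : (0:ℝ) ≤ ((d:ℕ):ℝ) ^ d := by positivity
  have hDpow : (0:ℝ) < (((d:ℕ):ℝ) / Real.exp 1) ^ d := by
    rcases Nat.eq_zero_or_pos d with h0 | h0
    · rw [h0]; norm_num
    · have : (0:ℝ) < ((d:ℕ):ℝ) := by exact_mod_cast h0
      positivity
  have hCN : 0 ≤ C / (n:ℝ) ^ K := by positivity
  calc hypProb k n r p {ω | HasRainbowHamCycle k l ω}
      ≤ (n.factorial : ℝ) * (r.descFactorial m) * (p / r) ^ m :=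
        bad_le hl2 hkl hkn hr hp0 hp1
    _ ≤ (Real.exp 1 * n * ((n:ℝ)/Real.exp 1)^n)
          * ((Real.exp 1 * r * ((r:ℝ)/Real.exp 1)^r) / (((d:ℕ):ℝ)/Real.exp 1)^d)
          * ((C/(n:ℝ)^K) / r) ^ m := by
        have b1 : (n.factorial : ℝ) ≤ Real.exp 1 * n * ((n:ℝ)/Real.exp 1)^n :=
          fact_upper n hn1
        have b2 : (r.descFactorial m : ℝ)
            ≤ (Real.exp 1 * r * ((r:ℝ)/Real.exp 1)^r) / (((d:ℕ):ℝ)/Real.exp 1)^d :=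
          descFactorial_le hmr hr
        have b3 : (p / (r:ℝ)) ^ m ≤ ((C/(n:ℝ)^K) / r) ^ m :=
          pow_le_pow_left₀ (by positivity) ((div_le_div_iff_of_pos_right hR).2 hpC) m
        exact mul_le_mul (mul_le_mul b1 b2 (by positivity) (by positivity)) b3
          (by positivity) (by positivity)
    _ = Real.exp 1 ^ 2 * (n:ℝ) * r * C ^ m * ((r:ℝ)^d / ((d:ℕ):ℝ)^d) * (n:ℝ)^ρ
          / Real.exp 1 ^ (n + m) := by
        have e1 : ((n:ℝ)/Real.exp 1)^n = ((n:ℝ)^(K*m) * (n:ℝ)^ρ) / (Real.exp 1 ^ n) := by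
          rw [div_pow, ← pow_add, ← hneq]
        have e2 : ((r:ℝ)/Real.exp 1)^r
            = ((r:ℝ)^m * (r:ℝ)^d) / (Real.exp 1 ^ m * Real.exp 1 ^ d) := by
          rw [div_pow, ← pow_add, ← pow_add, ← hreq]
        have e3 : (((d:ℕ):ℝ)/Real.exp 1)^d = ((d:ℕ):ℝ)^d / Real.exp 1 ^ d := div_pow _ _ _
        have e4 : ((C/(n:ℝ)^K)/(r:ℝ))^m = C^m / ((n:ℝ)^(K*m) * (r:ℝ)^m) := by
          rw [div_div, div_pow, mul_pow, ← pow_mul]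
        have e5 : Real.exp 1 ^ (n+m) = Real.exp 1 ^ n * Real.exp 1 ^ m := pow_add _ _ _
        rw [e1, e2, e3, e4, e5]
        field_simp
    _ ≤ Real.exp 1 ^ 2 * (n:ℝ) ^ K * r * C ^ m
          / Real.exp 1 ^ ((K + 1) * m) * ((r:ℝ)^d / ((d:ℕ):ℝ)^d) := by
        have h1 : (n:ℝ) * (n:ℝ)^ρ ≤ (n:ℝ)^K := by
          rw [← pow_succ']
          exact pow_le_pow_right₀ hN1 hρK
        have h2 : Real.exp 1 ^ ((K+1)*m) ≤ Real.exp 1 ^ (n+m) :=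
          pow_le_pow_right₀ hE1 (by
            have : (K+1)*m = K*m + m := by ring
            omega)
        have hB : (0:ℝ) ≤ Real.exp 1 ^ 2 * r * C ^ m * ((r:ℝ)^d / ((d:ℕ):ℝ)^d) := by
          positivity
        calc Real.exp 1 ^ 2 * (n:ℝ) * r * C ^ m * ((r:ℝ)^d / ((d:ℕ):ℝ)^d) * (n:ℝ)^ρ
              / Real.exp 1 ^ (n + m)
            = (Real.exp 1 ^ 2 * r * C ^ m * ((r:ℝ)^d / ((d:ℕ):ℝ)^d))
                * (((n:ℝ) * (n:ℝ)^ρ) / Real.exp 1 ^ (n+m)) := by ring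
          _ ≤ (Real.exp 1 ^ 2 * r * C ^ m * ((r:ℝ)^d / ((d:ℕ):ℝ)^d))
                * ((n:ℝ)^K / Real.exp 1 ^ ((K+1)*m)) := by
              apply mul_le_mul_of_nonneg_left _ hB
              exact div_le_div₀ (by positivity) h1 (by positivity) h2
          _ = Real.exp 1 ^ 2 * (n:ℝ) ^ K * r * C ^ m
                / Real.exp 1 ^ ((K + 1) * m) * ((r:ℝ)^d / ((d:ℕ):ℝ)^d) := by ring

end Master
section Limits
open Filter

lemma div_tendsto_atTop (K : ℕ) (hK : 1 ≤ K) :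
    Tendsto (fun n : ℕ => n / K) atTop atTop := by
  apply Filter.tendsto_atTop.2
  intro b
  rw [Filter.eventually_atTop]
  refine ⟨b * K, fun n hn => ?_⟩
  rw [Nat.le_div_iff_mul_le (by omega)]
  omega

lemma poly_geom_tendsto_zero (j K : ℕ) (hK : 1 ≤ K) (A q : ℝ) (hA : 0 ≤ A)
    (hq0 : 0 < q) (hq1 : q < 1) :
    Tendsto (fun n : ℕ => A * (n:ℝ)^j * q ^ (n / K)) atTop (nhds 0) := by
  have base : Tendsto (fun m : ℕ => (m:ℝ)^j * q^m) atTop (nhds 0) :=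
    tendsto_pow_const_mul_const_pow_of_abs_lt_one j (r := q)
      (by rw [abs_of_pos hq0]; exact hq1)
  have shift : Tendsto (fun m : ℕ => ((m+1 : ℕ):ℝ)^j * q^(m+1)) atTop (nhds 0) :=
    base.comp (tendsto_add_atTop_nat 1)
  have h : Tendsto (fun m : ℕ => A / q * (((m+1 : ℕ):ℝ)^j * q^(m+1)) * (K:ℝ)^j)
      atTop (nhds 0) := by
    have := (shift.const_mul (A / q)).mul_const ((K:ℝ)^j)
    simpa using this
  have comp : Tendsto
      (fun n : ℕ => A / q * ((((n / K)+1 : ℕ):ℝ)^j * q^((n / K)+1)) * (K:ℝ)^j)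
      atTop (nhds 0) := h.comp (div_tendsto_atTop K hK)
  apply squeeze_zero'
    (g := fun n : ℕ => A / q * ((((n / K)+1 : ℕ):ℝ)^j * q^((n / K)+1)) * (K:ℝ)^j)
    ?_ ?_ comp
  · filter_upwards with n
    positivity
  · filter_upwards with n
    have heq : A / q * ((((n / K)+1 : ℕ):ℝ)^j * q^((n / K)+1)) * (K:ℝ)^j
        = A * ((K:ℝ) * (((n / K)+1 : ℕ):ℝ))^j * q^(n / K) := by
      rw [mul_pow, pow_succ]
      field_simp
    rw [heq]
    apply mul_le_mul_of_nonneg_right _ (by positivity)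
    apply mul_le_mul_of_nonneg_left _ hA
    apply pow_le_pow_left₀ (Nat.cast_nonneg n)
    have hnat : n ≤ K * (n / K + 1) := by
      have := Nat.div_add_mod n K
      have := Nat.mod_lt n (show 0 < K by omega)
      have hdist : K * (n / K + 1) = K * (n/K) + K := by ring
      omega
    calc (n:ℝ) ≤ ((K * (n / K + 1) : ℕ) : ℝ) := by exact_mod_cast hnat
      _ = (K:ℝ) * (((n / K)+1 : ℕ):ℝ) := by push_cast; ring

end Limits
section CaseA
open scoped Classical

lemma caseA_bound {k l n r : ℕ} {p ε' : ℝ} (hl2 : 2 ≤ l) (hkl : l < k) (hkn : k < n)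
    (hε0 : 0 < ε') (hε2 : ε' ≤ 1/2)
    (hrval : r = n / (k - l) ∨ r = n / (k - l) + 1)
    (hp0 : 0 ≤ p) (hp1 : p ≤ 1)
    (hpC : p ≤ (1 - ε') * Real.exp 1 ^ (k - l + 1) / (n:ℝ) ^ (k - l)) :
    hypProb k n r p {ω | HasRainbowHamCycle k l ω}
      ≤ (4 * Real.exp 1 ^ 2) * (n:ℝ) ^ (k - l + 2) * (1 - ε') ^ (n / (k - l)) := by
  have hK1 : 1 ≤ k - l := Nat.sub_pos_of_lt hkl
  set K := k - l with hK
  set m := n / K with hm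
  have hn1 : 1 ≤ n := by omega
  have hm1 : 1 ≤ m := (Nat.one_le_div_iff (by omega)).2 (by omega)
  have hr1 : 0 < r := by omega
  have hmr : m ≤ r := by omega
  have hE : (0:ℝ) < Real.exp 1 := Real.exp_pos 1
  have hε1 : (0:ℝ) < 1 - ε' := by linarith
  have hC : (0:ℝ) ≤ (1 - ε') * Real.exp 1 ^ (K + 1) := by positivity
  have hmain := master (C := (1 - ε') * Real.exp 1 ^ (K + 1)) hl2 hkl hkn hr1 hmr hp0 hp1 hC
    (by rw [mul_div_assoc] at hpC ⊢; exact hpC)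
  set d := r - m with hd
  have hN1 : (1:ℝ) ≤ (n:ℝ) := by exact_mod_cast hn1
  have hR1 : (1:ℝ) ≤ (r:ℝ) := by exact_mod_cast hr1
  -- simplify the master bound
  have hsimp : Real.exp 1 ^ 2 * (n:ℝ) ^ K * r * ((1 - ε') * Real.exp 1 ^ (K + 1)) ^ m
        / Real.exp 1 ^ ((K + 1) * m) * ((r:ℝ) ^ d / ((d:ℕ):ℝ) ^ d)
      = Real.exp 1 ^ 2 * (n:ℝ) ^ K * r * (1 - ε') ^ m * ((r:ℝ) ^ d / ((d:ℕ):ℝ) ^ d) := by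
    rw [mul_pow, pow_mul]
    have hpow : (0:ℝ) < (Real.exp 1 ^ (K+1)) ^ m := by positivity
    field_simp
  rw [hsimp] at hmain
  have hQ : (r:ℝ) ^ d / ((d:ℕ):ℝ) ^ d ≤ (r:ℝ) := by
    rcases hrval with h | h
    · have : d = 0 := by omega
      rw [this]
      simpa using hR1
    · have : d = 1 := by omega
      rw [this]
      norm_num
  have hr2n : (r:ℝ) ≤ 2 * n := by
    have : r ≤ 2 * n := by
      have : m ≤ n := Nat.div_le_self n K
      omega
    exact_mod_cast this
  calc hypProb k n r p {ω | HasRainbowHamCycle k l ω}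
      ≤ Real.exp 1 ^ 2 * (n:ℝ) ^ K * r * (1 - ε') ^ m * ((r:ℝ) ^ d / ((d:ℕ):ℝ) ^ d) :=
        hmain
    _ ≤ Real.exp 1 ^ 2 * (n:ℝ) ^ K * (2*n) * (1 - ε') ^ m * (2*(n:ℝ)) := by
        have base : (0:ℝ) ≤ Real.exp 1 ^ 2 * (n:ℝ) ^ K := by positivity
        have h1 : Real.exp 1 ^ 2 * (n:ℝ) ^ K * r ≤ Real.exp 1 ^ 2 * (n:ℝ) ^ K * (2*n) :=
          mul_le_mul_of_nonneg_left hr2n base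
        have h2 : Real.exp 1 ^ 2 * (n:ℝ) ^ K * r * (1 - ε') ^ m
            ≤ Real.exp 1 ^ 2 * (n:ℝ) ^ K * (2*n) * (1 - ε') ^ m :=
          mul_le_mul_of_nonneg_right h1 (by positivity)
        apply mul_le_mul h2 (le_trans hQ hr2n) (by positivity)
        positivity
    _ = (4 * Real.exp 1 ^ 2) * (n:ℝ) ^ (K + 2) * (1 - ε') ^ m := by ring

end CaseA
section CaseB
open scoped Classical

lemma exp_rpow' (x y : ℝ) : (Real.exp x) ^ y = Real.exp (x * y) := by
  rw [Real.rpow_def_of_pos (Real.exp_pos x), Real.log_exp]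

set_option maxHeartbeats 2000000 in
lemma caseB_bound {k l n r : ℕ} {p ε' c : ℝ} (hl2 : 2 ≤ l) (hkl : l < k) (hkn : k < n)
    (hε0 : 0 < ε') (hε2 : ε' ≤ 1/2)
    (hc : 1 / ((k - l : ℕ):ℝ) < c)
    (hrfc : r = ⌊c * n⌋₊ ∨ r = ⌈c * n⌉₊)
    (hp0 : 0 ≤ p) (hp1 : p ≤ 1)
    (hpC : p ≤ (1 - ε') * ((c - 1/((k - l : ℕ):ℝ))/c) ^ (((k - l : ℕ):ℝ) * c - 1)
        * Real.exp 1 ^ (k - l + 1) / (n:ℝ) ^ (k - l))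
    (hd0 : 3 ≤ (c - 1/((k - l : ℕ):ℝ)) * n)
    (hcn : 1 + 2 * (c / (c - 1/((k - l : ℕ):ℝ))) ≤ c * n) :
    hypProb k n r p {ω | HasRainbowHamCycle k l ω}
      ≤ (Real.exp 1 ^ 2 * (c + 1) *
          (((c - 1/((k - l : ℕ):ℝ))/c) ^ (-(((k - l : ℕ):ℝ) * c - 1)) * Real.exp 4 *
            (2 * (c / (c - 1/((k - l : ℕ):ℝ)))) ^ (2:ℝ)))
        * (n:ℝ) ^ (k - l + 1) * (1 - ε') ^ (n / (k - l)) := by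
  have hK1 : 1 ≤ k - l := Nat.sub_pos_of_lt hkl
  set K := k - l with hKdef
  set m := n / K with hm
  have hn1 : 1 ≤ n := by omega
  have hN1 : (1:ℝ) ≤ (n:ℝ) := by exact_mod_cast hn1
  have hN0 : (0:ℝ) < (n:ℝ) := by linarith
  have hKR : (0:ℝ) < ((K:ℕ):ℝ) := by exact_mod_cast hK1
  have hcK : 0 < 1 / ((K:ℕ):ℝ) := by positivity
  have hc0 : 0 < c := lt_trans hcK hc
  set γ : ℝ := (c - 1/((K:ℕ):ℝ))/c with hγdef
  set β : ℝ := ((K:ℕ):ℝ) * c - 1 with hβdef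
  set u : ℝ := c / (c - 1/((K:ℕ):ℝ)) with hudef
  set d₀ : ℝ := (c - 1/((K:ℕ):ℝ)) * n with hd₀def
  have hcsub : 0 < c - 1/((K:ℕ):ℝ) := by linarith
  have hγ0 : 0 < γ := by rw [hγdef]; positivity
  have hγ1 : γ < 1 := by
    rw [hγdef, div_lt_one hc0]; linarith
  have hβ0 : 0 < β := by
    rw [hβdef]
    rw [div_lt_iff₀ hKR] at hc
    linarith
  have hu0 : 0 < u := by rw [hudef]; positivity
  have hd₀3 : 3 ≤ d₀ := hd0
  have hE : (0:ℝ) < Real.exp 1 := Real.exp_pos 1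
  have hε1 : (0:ℝ) < 1 - ε' := by linarith
  -- relations between m, r and real quantities
  have hm_le : (m:ℝ) ≤ (n:ℝ) / ((K:ℕ):ℝ) := Nat.cast_div_le
  have hm_gt : (n:ℝ) / ((K:ℕ):ℝ) - 1 < (m:ℝ) := by
    have hfl : ⌊(n:ℝ) / ((K:ℕ):ℝ)⌋₊ = n / K := by
      rw [Nat.floor_div_natCast, Nat.floor_natCast]
    have := Nat.lt_floor_add_one ((n:ℝ) / ((K:ℕ):ℝ))
    rw [hfl] at this
    rw [← hm] at this
    linarith
  have hR_le : (r:ℝ) ≤ c * n + 1 := by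
    rcases hrfc with h | h
    · rw [h]
      have h1 : (⌊c * (n:ℝ)⌋₊ : ℝ) ≤ c * n := Nat.floor_le (by positivity)
      linarith
    · rw [h]
      have := Nat.ceil_lt_add_one (show (0:ℝ) ≤ c * n by positivity)
      linarith
  have hR_ge : c * n - 1 ≤ (r:ℝ) := by
    rcases hrfc with h | h
    · rw [h]
      have := Nat.lt_floor_add_one (c * (n:ℝ))
      linarith
    · rw [h]
      have : c * (n:ℝ) ≤ (⌈c * (n:ℝ)⌉₊ : ℝ) := Nat.le_ceil _
      linarith
  have hnK : (n:ℝ) / ((K:ℕ):ℝ) = c * n - d₀ := by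
    rw [hd₀def]; field_simp; ring
  have hmrR : (m:ℝ) < (r:ℝ) := by
    calc (m:ℝ) ≤ (n:ℝ) / ((K:ℕ):ℝ) := hm_le
      _ = c * n - d₀ := hnK
      _ ≤ c * n - 3 := by linarith
      _ < c * n - 1 := by linarith
      _ ≤ r := hR_ge
  have hmr : m ≤ r := le_of_lt (by exact_mod_cast hmrR)
  set d := r - m with hd
  have hDR : ((d:ℕ):ℝ) = (r:ℝ) - (m:ℝ) := by
    rw [hd, Nat.cast_sub hmr]
  have hD_ge : d₀ - 1 ≤ ((d:ℕ):ℝ) := by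
    rw [hDR]
    have : c * n - d₀ - 0 ≥ (m:ℝ) - 0 := by rw [← hnK]; linarith [hm_le]
    linarith [hR_ge, hm_le, hnK ▸ hm_le]
  have hD_le : ((d:ℕ):ℝ) ≤ d₀ + 2 := by
    rw [hDR]
    have h1 : (n:ℝ) / ((K:ℕ):ℝ) - 1 < (m:ℝ) := hm_gt
    rw [hnK] at h1
    linarith [hR_le]
  have hD2 : (2:ℝ) ≤ ((d:ℕ):ℝ) := by linarith
  have hD0 : (0:ℝ) < ((d:ℕ):ℝ) := by linarith
  have hr1 : 0 < r := by
    have : (0:ℝ) < (r:ℝ) := by linarith [hmrR, (Nat.cast_nonneg m : (0:ℝ) ≤ (m:ℝ))]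
    exact_mod_cast this
  -- apply the master bound
  have hC : (0:ℝ) ≤ (1 - ε') * γ ^ β * Real.exp 1 ^ (K + 1) := by
    have : (0:ℝ) ≤ γ ^ β := Real.rpow_nonneg hγ0.le β
    positivity
  have hmain := master (C := (1 - ε') * γ ^ β * Real.exp 1 ^ (K + 1))
    hl2 hkl hkn hr1 hmr hp0 hp1 hC
    (by rw [mul_div_assoc] at hpC ⊢; exact hpC)
  set R : ℝ := (r:ℝ) with hR
  set D : ℝ := ((d:ℕ):ℝ) with hD
  -- split the C^m factor
  have hsimp : Real.exp 1 ^ 2 * (n:ℝ) ^ K * R * ((1 - ε') * γ ^ β * Real.exp 1 ^ (K + 1)) ^ m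
        / Real.exp 1 ^ ((K + 1) * m) * (R ^ d / D ^ d)
      = (Real.exp 1 ^ 2 * (n:ℝ) ^ K * R * (1 - ε') ^ m) * ((γ ^ β) ^ m * (R ^ d / D ^ d)) := by
    rw [mul_pow, mul_pow, pow_mul]
    have hpow : (0:ℝ) < (Real.exp 1 ^ (K+1)) ^ m := by positivity
    field_simp
  rw [hsimp] at hmain
  -- bound the G factor by a constant
  set V : ℝ := (c * n + 1) / (d₀ - 1) with hV
  have hV0 : 0 < V := by
    rw [hV]
    have h1 : (0:ℝ) < c * n + 1 := by positivity
    have h2 : (0:ℝ) < d₀ - 1 := by linarith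
    positivity
  have hgpow : (γ ^ β) ^ m = γ ^ (β * (m:ℝ)) := by
    rw [← Real.rpow_natCast (γ ^ β) m, ← Real.rpow_mul hγ0.le]
  have hg1 : γ ^ (β * (m:ℝ)) ≤ γ ^ (d₀ + (-β)) := by
    apply Real.rpow_le_rpow_of_exponent_ge hγ0 hγ1.le
    have hexp : d₀ + (-β) = β * ((n:ℝ) / ((K:ℕ):ℝ) - 1) := by
      rw [hd₀def, hβdef]
      field_simp
      ring
    rw [hexp]
    apply mul_le_mul_of_nonneg_left _ hβ0.le
    linarith [hm_gt]
  have hg2 : γ ^ (d₀ + (-β)) = γ ^ d₀ * γ ^ (-β) := Real.rpow_add hγ0 _ _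
  have hq1 : R ^ d / D ^ d = (R/D) ^ (((d:ℕ)):ℝ) := by
    rw [← div_pow, ← Real.rpow_natCast (R/D) d]
  have hRD1 : (1:ℝ) ≤ R / D := by
    rw [le_div_iff₀ hD0]
    linarith [hDR, (Nat.cast_nonneg m : (0:ℝ) ≤ (m:ℝ))]
  have hq2 : (R/D) ^ (((d:ℕ)):ℝ) ≤ (R/D) ^ (d₀ + 2) :=
    Real.rpow_le_rpow_of_exponent_le hRD1 hD_le
  have hRDV : R / D ≤ V := by
    rw [hV]
    apply div_le_div₀ (by positivity) hR_le (by linarith) hD_ge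
  have hq3 : (R/D) ^ (d₀ + 2) ≤ V ^ (d₀ + 2) :=
    Real.rpow_le_rpow (le_trans zero_le_one hRD1) hRDV (by linarith)
  have hq4 : V ^ (d₀ + 2) = V ^ d₀ * V ^ (2:ℝ) := Real.rpow_add hV0 _ _
  have hγc : γ * c = c - 1/((K:ℕ):ℝ) := by
    rw [hγdef]
    field_simp
  have hγV : γ * V = (d₀ + γ) / (d₀ - 1) := by
    have h1 : γ * (c * n + 1) = d₀ + γ := by
      rw [hd₀def, ← hγc]; ring
    rw [hV, mul_div_assoc', h1]
  have hγV2 : γ * V ≤ 1 + 2 / (d₀ - 1) := by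
    rw [hγV]
    rw [div_le_iff₀ (by linarith : (0:ℝ) < d₀ - 1)]
    have : (1 + 2/(d₀-1)) * (d₀ - 1) = d₀ + 1 := by
      have h2 : d₀ - 1 ≠ 0 := by
        have : (0:ℝ) < d₀ - 1 := by linarith
        exact ne_of_gt this
      rw [add_mul, one_mul, div_mul_cancel₀ _ h2]
      ring
    rw [this]
    linarith
  have hγV3 : γ * V ≤ Real.exp (2 / (d₀ - 1)) := by
    have := Real.add_one_le_exp (2 / (d₀ - 1))
    linarith
  have hgv : (γ * V) ^ d₀ ≤ Real.exp 4 := by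
    calc (γ * V) ^ d₀ ≤ (Real.exp (2 / (d₀ - 1))) ^ d₀ :=
          Real.rpow_le_rpow (by positivity) hγV3 (by linarith)
      _ = Real.exp (2 / (d₀ - 1) * d₀) := exp_rpow' _ _
      _ ≤ Real.exp 4 := by
          apply Real.exp_le_exp.2
          rw [div_mul_eq_mul_div, div_le_iff₀ (by linarith : (0:ℝ) < d₀ - 1)]
          linarith
  have hud₀ : u * d₀ = c * n := by
    have h1 : u * (c - 1/((K:ℕ):ℝ)) = c := by
      rw [hudef]
      exact div_mul_cancel₀ c (ne_of_gt hcsub)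
    rw [hd₀def, ← mul_assoc, h1]
  have hV2u : V ≤ 2 * u := by
    rw [hV, div_le_iff₀ (by linarith : (0:ℝ) < d₀ - 1)]
    have : 2 * u * (d₀ - 1) = 2 * (u * d₀) - 2 * u := by ring
    rw [this, hud₀]
    linarith
  have hVsq : V ^ (2:ℝ) ≤ (2*u) ^ (2:ℝ) :=
    Real.rpow_le_rpow hV0.le hV2u (by norm_num)
  -- assemble G ≤ A₀
  have hG : (γ ^ β) ^ m * (R ^ d / D ^ d)
      ≤ γ ^ (-β) * Real.exp 4 * (2*u) ^ (2:ℝ) := by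
    rw [hgpow, hq1]
    calc γ ^ (β * (m:ℝ)) * (R/D) ^ (((d:ℕ)):ℝ)
        ≤ (γ ^ d₀ * γ ^ (-β)) * (V ^ d₀ * V ^ (2:ℝ)) := by
          apply mul_le_mul (by rw [← hg2]; exact hg1) _ _ (by positivity)
          · rw [← hq4]; exact le_trans hq2 hq3
          · exact Real.rpow_nonneg (le_trans zero_le_one hRD1) _
      _ = ((γ * V) ^ d₀) * γ ^ (-β) * V ^ (2:ℝ) := by
          rw [Real.mul_rpow hγ0.le hV0.le]
          ring
      _ ≤ Real.exp 4 * γ ^ (-β) * (2*u) ^ (2:ℝ) := by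
          apply mul_le_mul _ hVsq (Real.rpow_nonneg hV0.le _) (by positivity)
          exact mul_le_mul_of_nonneg_right hgv (Real.rpow_nonneg hγ0.le _)
      _ = γ ^ (-β) * Real.exp 4 * (2*u) ^ (2:ℝ) := by ring
  -- final chain
  have hRcn : R ≤ (c + 1) * n := by
    calc R ≤ c * n + 1 := hR_le
      _ ≤ c * n + n := by linarith
      _ = (c + 1) * n := by ring
  have hA₀ : (0:ℝ) ≤ γ ^ (-β) * Real.exp 4 * (2*u) ^ (2:ℝ) := by
    have h1 : (0:ℝ) ≤ γ ^ (-β) := Real.rpow_nonneg hγ0.le _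
    have h2 : (0:ℝ) ≤ (2*u) ^ (2:ℝ) := Real.rpow_nonneg (by positivity) _
    positivity
  calc hypProb k n r p {ω | HasRainbowHamCycle k l ω}
      ≤ (Real.exp 1 ^ 2 * (n:ℝ) ^ K * R * (1 - ε') ^ m) * ((γ ^ β) ^ m * (R ^ d / D ^ d)) :=
        hmain
    _ ≤ (Real.exp 1 ^ 2 * (n:ℝ) ^ K * ((c+1) * n) * (1 - ε') ^ m)
          * (γ ^ (-β) * Real.exp 4 * (2*u) ^ (2:ℝ)) := by
        apply mul_le_mul _ hG _ (by positivity)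
        · apply mul_le_mul_of_nonneg_right _ (by positivity)
          exact mul_le_mul_of_nonneg_left hRcn (by positivity)
        · apply mul_nonneg
          · apply pow_nonneg
            exact Real.rpow_nonneg hγ0.le β
          · apply div_nonneg (by positivity) (by positivity)
    _ = (Real.exp 1 ^ 2 * (c + 1) *
          (γ ^ (-β) * Real.exp 4 * (2*u) ^ (2:ℝ))) * (n:ℝ) ^ (K + 1) * (1 - ε') ^ m := by
        ring

end CaseB
section Final
open Filter
open scoped Classical

/-- For fixed integers `k > ℓ ≥ 2`, `ε > 0` and `c ≥ 1/(k-ℓ)`, with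
`r = cn` (rounded up or down), if `p = p(n)` is at most `(1-ε)e^{k-ℓ+1}/n^{k-ℓ}` when
`c = 1/(k-ℓ)`, and at most `(1-ε)((c-1/(k-ℓ))/c)^{(k-ℓ)c-1} e^{k-ℓ+1}/n^{k-ℓ}` when
`c > 1/(k-ℓ)`, then whp `H^{(k)}_{n,p,r}` contains no rainbow `ℓ`-Hamilton cycle. -/
theorem rainbow_hamilton_zero_statement
    (k l : ℕ) (hl : 2 ≤ l) (hkl : l < k) (ε : ℝ) (hε : 0 < ε)
    (c : ℝ) (hc : 1 / ((k : ℝ) - l) ≤ c)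
    (r : ℕ → ℕ) (hr : ∀ n, r n = ⌊c * n⌋₊ ∨ r n = ⌈c * n⌉₊)
    (p : ℕ → ℝ) (hp01 : ∀ n, 0 ≤ p n ∧ p n ≤ 1)
    (hpeq : c = 1 / ((k : ℝ) - l) →
      ∀ n, 0 < n → p n ≤ (1 - ε) * Real.exp 1 ^ (k - l + 1) / (n : ℝ) ^ (k - l))
    (hpgt : 1 / ((k : ℝ) - l) < c →
      ∀ n, 0 < n → p n ≤ (1 - ε) * ((c - 1 / ((k : ℝ) - l)) / c) ^ (((k : ℝ) - l) * c - 1) *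
        Real.exp 1 ^ (k - l + 1) / (n : ℝ) ^ (k - l)) :
    Tendsto (fun n => hypProb k n (r n) (p n) {ω | ¬ HasRainbowHamCycle k l ω})
      atTop (nhds 1) := by
  have hK1 : 1 ≤ k - l := Nat.sub_pos_of_lt hkl
  have hKcast : ((k - l : ℕ):ℝ) = (k:ℝ) - (l:ℝ) := by
    rw [Nat.cast_sub (le_of_lt hkl)]
  have hKR : (0:ℝ) < ((k - l : ℕ):ℝ) := by exact_mod_cast hK1
  set ε' := min ε (1/2) with hε'def
  have hε'0 : 0 < ε' := lt_min hε (by norm_num)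
  have hε'2 : ε' ≤ 1/2 := min_le_right _ _
  have hε'ε : ε' ≤ ε := min_le_left _ _
  have hc0 : 0 < c := lt_of_lt_of_le (by positivity) (hKcast ▸ hc)
  set bad := fun n => hypProb k n (r n) (p n) {ω | HasRainbowHamCycle k l ω} with hbaddef
  have hbad0 : ∀ n, 0 ≤ bad n := fun n => hypProb_nonneg (hp01 n).1 (hp01 n).2 _
  have hE : (0:ℝ) < Real.exp 1 := Real.exp_pos 1
  have hq0 : (0:ℝ) < 1 - ε' := by
    have : ε' ≤ 1/2 := hε'2
    linarith
  have hq1 : 1 - ε' < 1 := by linarith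
  have natcast_tendsto : Tendsto (fun n : ℕ => (n:ℝ)) atTop atTop :=
    tendsto_natCast_atTop_atTop
  -- the key convergence
  have hbad_tendsto : Tendsto bad atTop (nhds 0) := by
    rcases eq_or_lt_of_le hc with hceq | hclt
    · -- case c = 1/(k-l)
      apply squeeze_zero' (Filter.Eventually.of_forall hbad0) ?_
        (poly_geom_tendsto_zero (k - l + 2) (k - l) hK1 (4 * Real.exp 1 ^ 2) (1 - ε')
          (by positivity) hq0 hq1)
      filter_upwards [eventually_gt_atTop k] with n hkn
      have hn0 : 0 < n := by omega
      -- value of r n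
      have hcn : c * (n:ℝ) = (n:ℝ) / ((k - l : ℕ):ℝ) := by
        rw [← hceq, hKcast]
        ring
      have hfloor : ⌊c * (n:ℝ)⌋₊ = n / (k - l) := by
        rw [hcn, Nat.floor_div_natCast, Nat.floor_natCast]
      have hceil : ⌈c * (n:ℝ)⌉₊ ≤ n / (k - l) + 1 := by
        apply Nat.ceil_le.2
        have := Nat.lt_floor_add_one (c * (n:ℝ))
        rw [hfloor] at this
        push_cast
        push_cast at this
        linarith
      have hceil2 : n / (k - l) ≤ ⌈c * (n:ℝ)⌉₊ := by
        rw [← hfloor]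
        exact Nat.floor_le_ceil _
      have hrval : r n = n / (k - l) ∨ r n = n / (k - l) + 1 := by
        rcases hr n with h | h <;> omega
      have hpC : p n ≤ (1 - ε') * Real.exp 1 ^ (k - l + 1) / (n:ℝ) ^ (k - l) := by
        have h1 := hpeq hceq.symm n hn0
        have h2 : (1 - ε) * Real.exp 1 ^ (k - l + 1) ≤ (1 - ε') * Real.exp 1 ^ (k - l + 1) :=
          mul_le_mul_of_nonneg_right (by linarith) (by positivity)
        have h3 : (0:ℝ) < (n:ℝ) ^ (k - l) := by positivity
        calc p n ≤ (1 - ε) * Real.exp 1 ^ (k - l + 1) / (n:ℝ) ^ (k - l) := h1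
          _ ≤ (1 - ε') * Real.exp 1 ^ (k - l + 1) / (n:ℝ) ^ (k - l) :=
              (div_le_div_iff_of_pos_right h3).2 h2
      exact caseA_bound hl hkl hkn hε'0 hε'2 hrval (hp01 n).1 (hp01 n).2 hpC
    · -- case c > 1/(k-l)
      have hclt' : 1 / ((k - l : ℕ):ℝ) < c := by rw [hKcast]; exact hclt
      have hcsub : 0 < c - 1 / ((k - l : ℕ):ℝ) := by
        have : 0 < 1 / ((k - l : ℕ):ℝ) := by positivity
        linarith
      set γ : ℝ := (c - 1/((k - l : ℕ):ℝ))/c with hγdef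
      set β : ℝ := ((k - l : ℕ):ℝ) * c - 1 with hβdef
      set u : ℝ := c / (c - 1/((k - l : ℕ):ℝ)) with hudef
      have hγ0 : 0 < γ := by rw [hγdef]; positivity
      have hu0 : 0 < u := by rw [hudef]; positivity
      set A : ℝ := Real.exp 1 ^ 2 * (c + 1) *
          (γ ^ (-β) * Real.exp 4 * (2 * u) ^ (2:ℝ)) with hAdef
      have hA : 0 ≤ A := by
        have h1 : (0:ℝ) ≤ γ ^ (-β) := Real.rpow_nonneg hγ0.le _
        have h2 : (0:ℝ) ≤ (2*u) ^ (2:ℝ) := Real.rpow_nonneg (by positivity) _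
        rw [hAdef]
        positivity
      apply squeeze_zero' (Filter.Eventually.of_forall hbad0) ?_
        (poly_geom_tendsto_zero (k - l + 1) (k - l) hK1 A (1 - ε') hA hq0 hq1)
      have ev1 : ∀ᶠ n : ℕ in atTop, 3 ≤ (c - 1/((k - l : ℕ):ℝ)) * n := by
        have : Tendsto (fun n : ℕ => (c - 1/((k - l : ℕ):ℝ)) * n) atTop atTop :=
          natcast_tendsto.const_mul_atTop hcsub
        exact this.eventually_ge_atTop 3
      have ev2 : ∀ᶠ n : ℕ in atTop, 1 + 2 * u ≤ c * n := by
        have : Tendsto (fun n : ℕ => c * (n:ℝ)) atTop atTop :=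
          natcast_tendsto.const_mul_atTop hc0
        exact this.eventually_ge_atTop _
      filter_upwards [eventually_gt_atTop k, ev1, ev2] with n hkn h1 h2
      have hn0 : 0 < n := by omega
      have hpC : p n ≤ (1 - ε') * γ ^ β * Real.exp 1 ^ (k - l + 1) / (n:ℝ) ^ (k - l) := by
        have ha := hpgt hclt n hn0
        have hKc : ((k:ℝ) - l) = ((k - l : ℕ):ℝ) := hKcast.symm
        rw [hKc] at ha
        have hγβ : (0:ℝ) ≤ γ ^ β := Real.rpow_nonneg hγ0.le _
        have h2' : (1 - ε) * γ ^ β * Real.exp 1 ^ (k - l + 1)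
            ≤ (1 - ε') * γ ^ β * Real.exp 1 ^ (k - l + 1) := by
          apply mul_le_mul_of_nonneg_right _ (by positivity)
          exact mul_le_mul_of_nonneg_right (by linarith) hγβ
        have h3 : (0:ℝ) < (n:ℝ) ^ (k - l) := by positivity
        calc p n ≤ (1 - ε) * γ ^ β * Real.exp 1 ^ (k - l + 1) / (n:ℝ) ^ (k - l) := ha
          _ ≤ (1 - ε') * γ ^ β * Real.exp 1 ^ (k - l + 1) / (n:ℝ) ^ (k - l) :=
              (div_le_div_iff_of_pos_right h3).2 h2'
      exact caseB_bound hl hkl hkn hε'0 hε'2 hclt' (hr n) (hp01 n).1 (hp01 n).2 hpC h1 h2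
  -- conclusion
  have ev_rpos : ∀ᶠ n : ℕ in atTop, 0 < r n := by
    have : Tendsto (fun n : ℕ => c * (n:ℝ)) atTop atTop :=
      natcast_tendsto.const_mul_atTop hc0
    filter_upwards [this.eventually_ge_atTop 1] with n h1
    have hfl : 1 ≤ ⌊c * (n:ℝ)⌋₊ := Nat.le_floor (by exact_mod_cast h1)
    have hcl : ⌊c * (n:ℝ)⌋₊ ≤ ⌈c * (n:ℝ)⌉₊ := Nat.floor_le_ceil _
    rcases hr n with h | h <;> omega
  have hone : ∀ᶠ n : ℕ in atTop,
      hypProb k n (r n) (p n) {ω | ¬ HasRainbowHamCycle k l ω} = 1 - bad n := by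
    filter_upwards [ev_rpos] with n hrpos
    have := hypProb_add_compl (k := k) (n := n) (p := p n) hrpos
      (fun ω => HasRainbowHamCycle k l ω)
    rw [hbaddef]
    simp only
    linarith
  have : Tendsto (fun n : ℕ => 1 - bad n) atTop (nhds 1) := by
    have h := Filter.Tendsto.sub
      (tendsto_const_nhds : Tendsto (fun _ : ℕ => (1:ℝ)) atTop (nhds 1)) hbad_tendsto
    simpa using h
  exact Tendsto.congr' (hone.mono fun n h => h.symm) this

end Final
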